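/- Let g be C¹ near 0 with g(0)=0, g'(0)=λ²>0, and suppose g(x)=λX(x)/(1+h(X(x))) for the function X with X²=2G, xX>0 (x≠0), where h is an odd C¹ function. Then with f(s):=(1/λ)h'(√(2s)), the Chouikha equation d/dx[G(x)/g(x)²]=f(G(x)) holds for |x| small. -/

import Mathlib

open Set Filter

theorem stmt_18 (ε r lam : ℝ) (hε : 0 < ε) (hr : 0 < r) (hlam : 0 < lam)
    (g G X h f : ℝ → ℝ)
    (hg : ContDiffOn ℝ 1 g (Ioo (-ε) ε))
    (hg0 : g 0 = 0) (hg'0 : deriv g 0 = lam ^ 2)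
    (hG : ∀ x, G x = ∫ u in (0:ℝ)..x, g u)
    (hXcont : ∀ᶠ x in nhds (0:ℝ), ContinuousAt X x)
    (hX2 : ∀ᶠ x in nhds (0:ℝ), (X x) ^ 2 = 2 * G x)
    (hXsgn : ∀ᶠ x in nhds (0:ℝ), x ≠ 0 → 0 < x * X x)
    (hh : ContDiffOn ℝ 1 h (Ioo (-r) r))
    (hodd : ∀ s ∈ Ioo (-r) r, h (-s) = -h s)
    (hUrabe : ∀ᶠ x in nhds (0:ℝ), g x = lam * X x / (1 + h (X x)))
    (hf : ∀ s, 0 ≤ s → f s = (1 / lam) * deriv h (Real.sqrt (2 * s))) :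
    ∃ δ > 0, ∀ x, |x| < δ → x ≠ 0 →
      HasDerivAt (fun y => G y / (g y) ^ 2) (f (G x)) x := by
  have hlam' : lam ≠ 0 := ne_of_gt hlam
  have hgc : ContinuousOn g (Ioo (-ε) ε) := hg.continuousOn
  have h0ε : (0:ℝ) ∈ Ioo (-ε) ε := ⟨by linarith, hε⟩
  have h0r : (0:ℝ) ∈ Ioo (-r) r := ⟨by linarith, hr⟩
  have hG0 : G 0 = 0 := by rw [hG]; simp
  have hX0 : X 0 = 0 := by
    have h2 : X 0 ^ 2 = 0 := by simpa [hG0] using hX2.self_of_nhds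
    exact pow_eq_zero_iff two_ne_zero |>.mp h2
  have hXc0 : ContinuousAt X 0 := hXcont.self_of_nhds
  have hh0 : h 0 = 0 := by
    have := hodd 0 h0r
    simp only [neg_zero] at this
    linarith
  have hhc0 : ContinuousAt h 0 :=
    (hh.contDiffAt (isOpen_Ioo.mem_nhds h0r)).continuousAt
  -- evenness of deriv h
  have heven : ∀ t, t ∈ Ioo (-r) r → deriv h (-t) = deriv h t := by
    intro t ht
    have hnt : -t ∈ Ioo (-r) r := ⟨by linarith [ht.2], by linarith [ht.1]⟩
    have hd1 : HasDerivAt h (deriv h t) t :=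
      ((hh.contDiffAt (isOpen_Ioo.mem_nhds ht)).differentiableAt one_ne_zero).hasDerivAt
    have hd2 : HasDerivAt h (deriv h (-t)) (-t) :=
      ((hh.contDiffAt (isOpen_Ioo.mem_nhds hnt)).differentiableAt one_ne_zero).hasDerivAt
    have hd3 : HasDerivAt (fun s => h (-s)) (-(deriv h (-t))) t := by
      have := hd2.comp t (hasDerivAt_neg t)
      simp [Function.comp, mul_comm] at this
      exact this
    have hd4 : HasDerivAt (fun s => h (-s)) (-(deriv h t)) t := by
      apply hd1.neg.congr_of_eventuallyEq
      filter_upwards [isOpen_Ioo.mem_nhds ht] with s hs using hodd s hs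
    have := hd3.unique hd4
    linarith
  -- eventual facts near 0
  have E1 : ∀ᶠ y in nhds (0:ℝ), X y ∈ Ioo (-r) r := by
    have hmem : Ioo (-r) r ∈ nhds (X 0) := by
      rw [hX0]; exact isOpen_Ioo.mem_nhds h0r
    exact hXc0.eventually_mem hmem
  have E2 : ∀ᶠ y in nhds (0:ℝ), |h (X y)| < 1/2 := by
    have hhcX : ContinuousAt h (X 0) := by rw [hX0]; exact hhc0
    have hc : ContinuousAt (fun y => h (X y)) 0 := hhcX.comp hXc0
    have hmem : {t : ℝ | |t| < 1/2} ∈ nhds (h (X 0)) := by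
      rw [hX0, hh0]
      exact (isOpen_lt continuous_abs continuous_const).mem_nhds (by norm_num)
    filter_upwards [hc.eventually_mem hmem] with y hy using hy
  have hbig : ∀ᶠ y in nhds (0:ℝ),
      (X y) ^ 2 = 2 * G y ∧ (y ≠ 0 → 0 < y * X y) ∧
      g y = lam * X y / (1 + h (X y)) ∧ X y ∈ Ioo (-r) r ∧
      |h (X y)| < 1/2 ∧ y ∈ Ioo (-ε) ε := by
    filter_upwards [hX2, hXsgn, hUrabe, E1, E2, isOpen_Ioo.mem_nhds h0ε] with
      y a b c d e m using ⟨a, b, c, d, e, m⟩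
  rw [Metric.eventually_nhds_iff] at hbig
  obtain ⟨δ, hδ, hPd⟩ := hbig
  have hP : ∀ y : ℝ, |y| < δ →
      (X y) ^ 2 = 2 * G y ∧ (y ≠ 0 → 0 < y * X y) ∧
      g y = lam * X y / (1 + h (X y)) ∧ X y ∈ Ioo (-r) r ∧
      |h (X y)| < 1/2 ∧ y ∈ Ioo (-ε) ε := by
    intro y hy
    exact hPd (by simpa [Real.dist_eq] using hy)
  refine ⟨δ, hδ, ?_⟩
  intro x hx hx0
  obtain ⟨hX2x, hsgnx, hgx, hXmem, hhalfx, hxε⟩ := hP x hx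
  have hXxne : X x ≠ 0 := by
    intro h0
    have := hsgnx hx0
    rw [h0, mul_zero] at this
    exact lt_irrefl _ this
  have hGxpos : 0 < G x := by
    have h1 : 0 < (X x) ^ 2 :=
      lt_of_le_of_ne (sq_nonneg _) (Ne.symm (pow_ne_zero 2 hXxne))
    linarith [hX2x]
  have h2Gne : 2 * G x ≠ 0 := by positivity
  -- derivative of G
  have hDG : HasDerivAt G (g x) x := by
    have hsub : uIcc (0:ℝ) x ⊆ Ioo (-ε) ε := by
      intro t ht
      rcases Set.mem_uIcc.mp ht with ht1 | ht1
      · have hab : |t| < δ := by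
          rw [abs_lt]; constructor <;> nlinarith [abs_nonneg x, le_abs_self x, ht1.1, ht1.2, hx]
        exact (hP t hab).2.2.2.2.2
      · have hab : |t| < δ := by
          rw [abs_lt]
          constructor <;> nlinarith [neg_abs_le x, ht1.1, ht1.2, hx]
        exact (hP t hab).2.2.2.2.2
    have hint : IntervalIntegrable g MeasureTheory.volume 0 x :=
      (hgc.mono hsub).intervalIntegrable
    have hmeas := ContinuousOn.stronglyMeasurableAtFilter isOpen_Ioo hgc
      (μ := MeasureTheory.volume) x hxε
    have hcont : ContinuousAt g x := hgc.continuousAt (isOpen_Ioo.mem_nhds hxε)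
    have := intervalIntegral.integral_hasDerivAt_right hint hmeas hcont
    rwa [show (fun u => ∫ t in (0:ℝ)..u, g t) = G from (funext fun u => (hG u).symm)] at this
  -- derivative of X at x
  have hsqrtpos : 0 < Real.sqrt (2 * G x) := Real.sqrt_pos.mpr (by linarith)
  have hsd : HasDerivAt (fun y => Real.sqrt (2 * G y))
      (1 / (2 * Real.sqrt (2 * G x)) * (2 * g x)) x := by
    have := (Real.hasDerivAt_sqrt h2Gne).comp x (hDG.const_mul 2)
    simpa only [Function.comp_def] using this
  have hXD : HasDerivAt X (g x / X x) x := by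
    rcases hx0.lt_or_gt with hneg | hpos
    · -- x < 0 : X y = -sqrt (2 G y) near x
      have hXxneg : X x < 0 := by
        rcases mul_pos_iff.mp (hsgnx hx0) with ⟨h1, _⟩ | ⟨_, h2⟩
        · linarith
        · exact h2
      have hXxeq : X x = -Real.sqrt (2 * G x) := by
        rw [← hX2x, Real.sqrt_sq_eq_abs, abs_of_neg hXxneg, neg_neg]
      have hmem : Ioo (-δ) (0:ℝ) ∈ nhds x :=
        isOpen_Ioo.mem_nhds ⟨by have := abs_lt.mp hx; linarith [this.1], hneg⟩
      have hXeq : X =ᶠ[nhds x] (fun y => -Real.sqrt (2 * G y)) := by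
        filter_upwards [hmem] with y hy
        have hyδ : |y| < δ := abs_lt.mpr ⟨hy.1, by linarith [hy.2]⟩
        obtain ⟨hX2y, hsgny, _, _, _, _⟩ := hP y hyδ
        have hXyneg : X y < 0 := by
          rcases mul_pos_iff.mp (hsgny (ne_of_lt hy.2)) with ⟨h1, _⟩ | ⟨_, h2⟩
          · linarith [hy.2]
          · exact h2
        rw [← hX2y, Real.sqrt_sq_eq_abs, abs_of_neg hXyneg, neg_neg]
      have hD := hsd.neg.congr_of_eventuallyEq hXeq
      refine hD.congr_deriv ?_
      rw [hXxeq]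
      field_simp
    · -- 0 < x : X y = sqrt (2 G y) near x
      have hXxpos : 0 < X x := by
        rcases mul_pos_iff.mp (hsgnx hx0) with ⟨_, h2⟩ | ⟨h1, _⟩
        · exact h2
        · linarith
      have hXxeq : X x = Real.sqrt (2 * G x) := by
        rw [← hX2x, Real.sqrt_sq_eq_abs, abs_of_pos hXxpos]
      have hmem : Ioo (0:ℝ) δ ∈ nhds x :=
        isOpen_Ioo.mem_nhds ⟨hpos, lt_of_abs_lt hx⟩
      have hXeq : X =ᶠ[nhds x] (fun y => Real.sqrt (2 * G y)) := by
        filter_upwards [hmem] with y hy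
        have hyδ : |y| < δ := abs_lt.mpr ⟨by linarith [hy.1], hy.2⟩
        obtain ⟨hX2y, hsgny, _, _, _, _⟩ := hP y hyδ
        have hXypos : 0 < X y := by
          rcases mul_pos_iff.mp (hsgny (ne_of_gt hy.1)) with ⟨_, h2⟩ | ⟨h1, _⟩
          · exact h2
          · linarith [hy.1]
        rw [← hX2y, Real.sqrt_sq_eq_abs, abs_of_pos hXypos]
      have hD := hsd.congr_of_eventuallyEq hXeq
      refine hD.congr_deriv ?_
      rw [hXxeq]
      field_simp
  -- derivative of h ∘ X
  have h1hx : (0:ℝ) < 1 + h (X x) := by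
    have := abs_lt.mp hhalfx
    linarith [this.1]
  have h1hx' : 1 + h (X x) ≠ 0 := ne_of_gt h1hx
  have hhd : HasDerivAt h (deriv h (X x)) (X x) :=
    ((hh.contDiffAt (isOpen_Ioo.mem_nhds hXmem)).differentiableAt one_ne_zero).hasDerivAt
  have hcomp : HasDerivAt (fun y => h (X y)) (deriv h (X x) * (g x / X x)) x := by
    have := hhd.comp x hXD
    exact this
  have hF : HasDerivAt (fun y => (1 + h (X y)) ^ 2 / (2 * lam ^ 2))
      ((1 / lam) * deriv h (X x)) x := by
    have h1 : HasDerivAt (fun y => (1 + h (X y)) ^ 2)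
        ((2 : ℕ) * (1 + h (X x)) ^ 1 * (deriv h (X x) * (g x / X x))) x :=
      (hcomp.const_add 1).pow 2
    have h2 := h1.div_const (2 * lam ^ 2)
    refine h2.congr_deriv ?_
    rw [hgx]
    field_simp
    ring
  -- value of f (G x)
  have hfGx : f (G x) = (1 / lam) * deriv h (X x) := by
    rw [hf (G x) hGxpos.le]
    congr 1
    rw [← hX2x, Real.sqrt_sq_eq_abs]
    rcases abs_choice (X x) with habs | habs
    · rw [habs]
    · rw [habs, heven (X x) hXmem]
  rw [hfGx]
  -- transfer along eventual equality
  apply hF.congr_of_eventuallyEq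
  have hmem : (Ioo (-δ) δ) ∈ nhds x := isOpen_Ioo.mem_nhds (abs_lt.mp hx |> fun h' => ⟨h'.1, h'.2⟩)
  filter_upwards [hmem, eventually_ne_nhds hx0] with y hy hy0
  have hyδ : |y| < δ := abs_lt.mpr hy
  obtain ⟨hX2y, hsgny, hgy, _, hhalfy, _⟩ := hP y hyδ
  have hXyne : X y ≠ 0 := by
    intro h0
    have := hsgny hy0
    rw [h0, mul_zero] at this
    exact lt_irrefl _ this
  have hGypos : 0 < G y := by
    have h1 : 0 < (X y) ^ 2 :=
      lt_of_le_of_ne (sq_nonneg _) (Ne.symm (pow_ne_zero 2 hXyne))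
    linarith [hX2y]
  have h1hy : (0:ℝ) < 1 + h (X y) := by
    have := abs_lt.mp hhalfy
    linarith [this.1]
  have hgsq : g y ^ 2 = lam ^ 2 * (2 * G y) / (1 + h (X y)) ^ 2 := by
    rw [hgy, div_pow, mul_pow, hX2y]
  rw [hgsq]
  field_simp
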